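/- Let D and E be the infinite tridiagonal matrices over ℤ[q] (indexed by positive integers) defined by D(i,i) = [i], D(i,i+1) = [i+1], D(i,j) = 0 otherwise, and E(i,i) = [i], E(i+1,i) = [i], E(i,j) = 0 otherwise, where [i] = 1 + q + ⋯ + q^{i-1}. Then DE − qED = D + E (entrywise, each side being a well-defined matrix since all products involve finitely many nonzero terms per entry). -/

import Mathlib

open Polynomial Finset

/-- The q-analog `[n] = 1 + q + ⋯ + q^{n-1}` in `ℤ[q]`. -/
noncomputable def qa (n : ℕ) : Polynomial ℤ := ∑ k ∈ range n, X ^ k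

/-- Infinite matrix `D` indexed by positive integers (here `i : ℕ` stands for row `i+1`):
`D(i,i) = [i]`, `D(i,i+1) = [i+1]`, 0 otherwise. -/
noncomputable def Dmat (i j : ℕ) : Polynomial ℤ :=
  if j = i then qa (i + 1) else if j = i + 1 then qa (i + 2) else 0

/-- Infinite matrix `E` indexed by positive integers (here `i : ℕ` stands for row `i+1`):
`E(i,i) = [i]`, `E(i+1,i) = [i]`, 0 otherwise. -/
noncomputable def Emat (i j : ℕ) : Polynomial ℤ :=
  if j = i then qa (i + 1) else if i = j + 1 then qa (j + 1) else 0

/-- Entrywise product of banded infinite matrices: since all but finitely many terms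
vanish, the sum over `range (i + j + 2)` equals the full matrix product entry. -/
noncomputable def matMul (A B : ℕ → ℕ → Polynomial ℤ) (i j : ℕ) : Polynomial ℤ :=
  ∑ k ∈ range (i + j + 2), A i k * B k j

lemma qa_succ (n : ℕ) : qa (n + 1) = 1 + X * qa n := by
  simp only [qa, Finset.sum_range_succ', pow_succ, pow_zero, ← Finset.sum_mul]
  ring

lemma qa_zero : qa 0 = 0 := by simp [qa]

lemma Dmat_self (n : ℕ) : Dmat n n = qa (n + 1) := if_pos rfl

lemma Dmat_sup (n : ℕ) : Dmat n (n + 1) = qa (n + 2) := by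
  simp [Dmat]

lemma Dmat_zero {n j : ℕ} (h1 : j ≠ n) (h2 : j ≠ n + 1) : Dmat n j = 0 := by
  simp only [Dmat]
  rw [if_neg h1, if_neg h2]

lemma Emat_self (n : ℕ) : Emat n n = qa (n + 1) := if_pos rfl

lemma Emat_sub (n : ℕ) : Emat (n + 1) n = qa (n + 1) := by
  simp [Emat]

lemma Emat_zero {n j : ℕ} (h1 : j ≠ n) (h2 : n ≠ j + 1) : Emat n j = 0 := by
  simp only [Emat]
  rw [if_neg h1, if_neg h2]

lemma hD (i j : ℕ) :
    matMul Dmat Emat i j = Dmat i i * Emat i j + Dmat i (i + 1) * Emat (i + 1) j := by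
  unfold matMul
  rw [← Finset.sum_subset (s₁ := ({i, i + 1} : Finset ℕ))
      (by intro k hk; simp only [Finset.mem_insert, Finset.mem_singleton] at hk
          simp only [Finset.mem_range]; omega)
      (by intro k _ hk
          simp only [Finset.mem_insert, Finset.mem_singleton, not_or] at hk
          rw [Dmat_zero (by omega) (by omega), zero_mul]),
    Finset.sum_pair (by omega : i ≠ i + 1)]

lemma hE0 (j : ℕ) : matMul Emat Dmat 0 j = Emat 0 0 * Dmat 0 j := by
  unfold matMul
  refine Finset.sum_eq_single 0 ?_ (by simp)
  intro k _ hk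
  rw [Emat_zero (by omega) (by omega), zero_mul]

lemma hE (i j : ℕ) :
    matMul Emat Dmat (i + 1) j
      = Emat (i + 1) i * Dmat i j + Emat (i + 1) (i + 1) * Dmat (i + 1) j := by
  unfold matMul
  rw [← Finset.sum_subset (s₁ := ({i, i + 1} : Finset ℕ))
      (by intro k hk; simp only [Finset.mem_insert, Finset.mem_singleton] at hk
          simp only [Finset.mem_range]; omega)
      (by intro k _ hk
          simp only [Finset.mem_insert, Finset.mem_singleton, not_or] at hk
          rw [Emat_zero (by omega) (by omega), zero_mul]),
    Finset.sum_pair (by omega : i ≠ i + 1)]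

/-- `DE − qED = D + E` entrywise. -/
theorem stmt1 (i j : ℕ) :
    matMul Dmat Emat i j - X * matMul Emat Dmat i j = Dmat i j + Emat i j := by
  rw [hD]
  rcases i with _ | i
  · rw [hE0]
    rcases Nat.lt_trichotomy j 1 with h | h | h
    · obtain rfl : j = 0 := by omega
      rw [Dmat_self 0, Emat_self 0, Dmat_sup 0, Emat_sub 0]
      simp only [qa_succ, qa_zero]; ring
    · subst h
      rw [show Emat 0 1 = 0 from Emat_zero (by omega) (by omega),
        show Dmat 0 1 = qa 2 from by simp [Dmat],
        show Emat (0 + 1) 1 = qa 2 from by simp [Emat],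
        Dmat_self 0, Emat_self 0]
      simp only [qa_succ, qa_zero]; ring
    · rw [show Emat 0 j = 0 from Emat_zero (by omega) (by omega),
        show Emat (0 + 1) j = 0 from Emat_zero (by omega) (by omega),
        show Dmat 0 j = 0 from Dmat_zero (by omega) (by omega)]
      ring
  · rw [hE]
    rcases Nat.lt_trichotomy j (i + 1) with h | h | h
    · rcases Nat.eq_or_lt_of_le (Nat.lt_succ_iff.mp h) with h' | h'
      · -- j = i : subdiagonal
        subst h'
        rw [show Emat (j + 1 + 1) j = 0 from Emat_zero (by omega) (by omega),
          show Dmat (j + 1) j = 0 from Dmat_zero (by omega) (by omega),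
          Dmat_self (j + 1), Emat_sub j, Dmat_sup (j + 1), Dmat_self j,
          Emat_self (j + 1)]
        simp only [qa_succ]; ring
      · -- j < i : far below diagonal
        rw [show Emat (i + 1) j = 0 from Emat_zero (by omega) (by omega),
          show Emat (i + 1 + 1) j = 0 from Emat_zero (by omega) (by omega),
          show Dmat i j = 0 from Dmat_zero (by omega) (by omega),
          show Dmat (i + 1) j = 0 from Dmat_zero (by omega) (by omega)]
        ring
    · -- j = i + 1 : diagonal
      subst h
      rw [Dmat_self (i + 1), Emat_self (i + 1), Dmat_sup (i + 1), Emat_sub (i + 1),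
        Emat_sub i, Dmat_sup i]
      simp only [qa_succ]; ring
    · rcases Nat.eq_or_lt_of_le (Nat.succ_le_of_lt h) with h' | h'
      · -- j = i + 2 : superdiagonal
        obtain rfl : j = i + 1 + 1 := by omega
        rw [show Emat (i + 1) (i + 1 + 1) = 0 from Emat_zero (by omega) (by omega),
          show Dmat i (i + 1 + 1) = 0 from Dmat_zero (by omega) (by omega),
          Dmat_sup (i + 1), Emat_self (i + 1 + 1), Emat_sub i, Emat_self (i + 1),
          Dmat_self (i + 1)]
        simp only [qa_succ]; ring
      · -- j ≥ i + 3 : far above diagonal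
        rw [show Emat (i + 1) j = 0 from Emat_zero (by omega) (by omega),
          show Emat (i + 1 + 1) j = 0 from Emat_zero (by omega) (by omega),
          show Dmat i j = 0 from Dmat_zero (by omega) (by omega),
          show Dmat (i + 1) j = 0 from Dmat_zero (by omega) (by omega)]
        ring
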